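/- Let U : Ω₁ × Ω₂ → [0,1] be a measurable function on a product of probability spaces (a bigraphon). For all i, j, h ∈ ℕ we have t_B(K_{i,h},U) · t_B(K_{j,h},U) ≤ t_B(K_{i+j,h},U). -/

import Mathlib

open MeasureTheory

/-- The bipartite homomorphism density of the complete bipartite graph `K_{a,b}` in a
bigraphon `U : Ω₁ × Ω₂ → [0,1]`. -/
noncomputable def tBcomplete {Ω₁ Ω₂ : Type*} [MeasurableSpace Ω₁] [MeasurableSpace Ω₂]
    (μ : Measure Ω₁) (ν : Measure Ω₂) (U : Ω₁ → Ω₂ → ℝ) (a b : ℕ) : ℝ :=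
  ∫ x : Fin a → Ω₁, ∫ y : Fin b → Ω₂, (∏ r, ∏ s, U (x r) (y s))
    ∂(Measure.pi fun _ => ν) ∂(Measure.pi fun _ => μ)

/-- Integral of a product over a power space equals a power of the integral. -/
lemma integral_pi_prod_eq_pow {Ω : Type*} [MeasurableSpace Ω] (μ : Measure Ω)
    [SigmaFinite μ] (g : Ω → ℝ) (a : ℕ) :
    ∫ x : Fin a → Ω, ∏ r, g (x r) ∂(Measure.pi fun _ => μ) = (∫ z, g z ∂μ) ^ a := by
  letI : MeasureSpace Ω := ⟨μ⟩
  have h := MeasureTheory.integral_fintype_prod_eq_pow (ι := Fin a) g (μ := μ)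
  simpa [MeasureTheory.volume_pi] using h

/-- Integrability of a bounded measurable function w.r.t. a probability measure. -/
lemma integrable_of_bdd {α : Type*} [MeasurableSpace α] {m : Measure α}
    [IsFiniteMeasure m] {f : α → ℝ} (hf : Measurable f)
    (h0 : ∀ x, 0 ≤ f x) (h1 : ∀ x, f x ≤ 1) : Integrable f m := by
  refine ⟨hf.aestronglyMeasurable, ?_⟩
  refine HasFiniteIntegral.of_bounded (C := 1) ?_
  filter_upwards with x
  rw [Real.norm_eq_abs, abs_le]
  exact ⟨by linarith [h0 x], h1 x⟩

/-- Chebyshev correlation inequality for powers of a `[0,1]`-valued function. -/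
lemma integral_pow_mul_integral_pow_le {α : Type*} [MeasurableSpace α] (m : Measure α)
    [IsProbabilityMeasure m] (F : α → ℝ) (hF : Measurable F)
    (h0 : ∀ x, 0 ≤ F x) (h1 : ∀ x, F x ≤ 1) (i j : ℕ) :
    (∫ x, F x ^ i ∂m) * (∫ x, F x ^ j ∂m) ≤ ∫ x, F x ^ (i + j) ∂m := by
  have hFi : Measurable fun x => F x ^ i := hF.pow_const i
  have hFj : Measurable fun x => F x ^ j := hF.pow_const j
  have b0 : ∀ (k : ℕ) x, 0 ≤ F x ^ k := fun k x => pow_nonneg (h0 x) k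
  have b1 : ∀ (k : ℕ) x, F x ^ k ≤ 1 := fun k x => pow_le_one₀ (h0 x) (h1 x)
  have inti : Integrable (fun x => F x ^ i) m := integrable_of_bdd hFi (b0 i) (b1 i)
  have intj : Integrable (fun x => F x ^ j) m := integrable_of_bdd hFj (b0 j) (b1 j)
  have intij : Integrable (fun x => F x ^ i * F x ^ j) m :=
    integrable_of_bdd (hFi.mul hFj) (fun x => mul_nonneg (b0 i x) (b0 j x))
      (fun x => mul_le_one₀ (b1 i x) (b0 j x) (b1 j x))
  set Ii := ∫ x, F x ^ i ∂m with hIi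
  set Ij := ∫ x, F x ^ j ∂m with hIj
  set Iij := ∫ x, F x ^ i * F x ^ j ∂m with hIij
  have key : 0 ≤ ∫ x, ∫ y, (F x ^ i - F y ^ i) * (F x ^ j - F y ^ j) ∂m ∂m := by
    refine integral_nonneg fun x => integral_nonneg fun y => ?_
    rcases le_total (F x) (F y) with hc | hc
    · have h₁ := sub_nonpos.2 (pow_le_pow_left₀ (h0 x) hc i)
      have h₂ := sub_nonpos.2 (pow_le_pow_left₀ (h0 x) hc j)
      have e : (F x ^ i - F y ^ i) * (F x ^ j - F y ^ j)
          = (-(F x ^ i - F y ^ i)) * (-(F x ^ j - F y ^ j)) := by ring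
      rw [e]
      exact mul_nonneg (neg_nonneg.2 h₁) (neg_nonneg.2 h₂)
    · exact mul_nonneg
        (sub_nonneg.2 (pow_le_pow_left₀ (h0 y) hc i))
        (sub_nonneg.2 (pow_le_pow_left₀ (h0 y) hc j))
  have inner : ∀ x, ∫ y, (F x ^ i - F y ^ i) * (F x ^ j - F y ^ j) ∂m
      = F x ^ i * F x ^ j - F x ^ i * Ij - Ii * F x ^ j + Iij := by
    intro x
    have I1 : Integrable (fun y => F x ^ i * F y ^ j) m := intj.const_mul _
    have I2 : Integrable (fun y => F y ^ i * F x ^ j) m := inti.mul_const _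
    have e : (fun y => (F x ^ i - F y ^ i) * (F x ^ j - F y ^ j))
        = fun y => ((F x ^ i * F x ^ j - F x ^ i * F y ^ j) - F y ^ i * F x ^ j)
            + F y ^ i * F y ^ j := by
      funext y; ring
    have I3 : Integrable (fun y => F x ^ i * F x ^ j - F x ^ i * F y ^ j) m :=
      (integrable_const _).sub I1
    have I4 : Integrable
        (fun y => F x ^ i * F x ^ j - F x ^ i * F y ^ j - F y ^ i * F x ^ j) m := I3.sub I2
    rw [e, integral_add I4 intij, integral_sub I3 I2,
      integral_sub (integrable_const _) I1,
      integral_const, integral_const_mul, integral_mul_const]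
    simp only [probReal_univ, ENNReal.toReal_one, one_smul, ← hIi, ← hIj, ← hIij]
  have expand : ∫ x, ∫ y, (F x ^ i - F y ^ i) * (F x ^ j - F y ^ j) ∂m ∂m
      = 2 * (Iij - Ii * Ij) := by
    have I1 : Integrable (fun x => F x ^ i * Ij) m := inti.mul_const _
    have I2 : Integrable (fun x => Ii * F x ^ j) m := intj.const_mul _
    have I3 : Integrable (fun x => F x ^ i * F x ^ j - F x ^ i * Ij) m := intij.sub I1
    have I4 : Integrable
        (fun x => F x ^ i * F x ^ j - F x ^ i * Ij - Ii * F x ^ j) m := I3.sub I2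
    rw [show (fun x => ∫ y, (F x ^ i - F y ^ i) * (F x ^ j - F y ^ j) ∂m)
        = fun x => F x ^ i * F x ^ j - F x ^ i * Ij - Ii * F x ^ j + Iij from
      funext inner]
    rw [integral_add I4 (integrable_const _),
      integral_sub I3 I2, integral_sub intij I1,
      integral_mul_const, integral_const_mul, integral_const]
    simp only [probReal_univ, ENNReal.toReal_one, one_smul, ← hIi, ← hIj, ← hIij]
    ring
  rw [expand] at key
  have hle : Ii * Ij ≤ Iij := by linarith
  calc Ii * Ij ≤ Iij := hle
    _ = ∫ x, F x ^ (i + j) ∂m := by simp_rw [pow_add]; exact hIij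

/-- For all `i, j, h ∈ ℕ` we have `t_B(K_{i,h},U) · t_B(K_{j,h},U) ≤ t_B(K_{i+j,h},U)`. -/
theorem tB_complete_supermultiplicative {Ω₁ Ω₂ : Type*} [MeasurableSpace Ω₁]
    [MeasurableSpace Ω₂] (μ : Measure Ω₁) (ν : Measure Ω₂)
    [IsProbabilityMeasure μ] [IsProbabilityMeasure ν]
    (U : Ω₁ → Ω₂ → ℝ) (hU : Measurable (Function.uncurry U))
    (hU0 : ∀ x y, 0 ≤ U x y) (hU1 : ∀ x y, U x y ≤ 1) (i j h : ℕ) :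
    tBcomplete μ ν U i h * tBcomplete μ ν U j h ≤ tBcomplete μ ν U (i + j) h := by
  set F : (Fin h → Ω₂) → ℝ := fun y => ∫ z, ∏ s, U z (y s) ∂μ with hF
  have hGmeas : ∀ (a : ℕ), Measurable fun p : (Fin a → Ω₁) × (Fin h → Ω₂) =>
      ∏ r, ∏ s, U (p.1 r) (p.2 s) := by
    intro a
    refine Finset.measurable_prod _ fun r _ => Finset.measurable_prod _ fun s _ => ?_
    show Measurable fun p : (Fin a → Ω₁) × (Fin h → Ω₂) =>
      Function.uncurry U (p.1 r, p.2 s)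
    exact hU.comp (((measurable_pi_apply r).comp measurable_fst).prodMk
      ((measurable_pi_apply s).comp measurable_snd))
  have hG0 : ∀ (a : ℕ) (p : (Fin a → Ω₁) × (Fin h → Ω₂)),
      0 ≤ ∏ r, ∏ s, U (p.1 r) (p.2 s) := fun a p =>
    Finset.prod_nonneg fun r _ => Finset.prod_nonneg fun s _ => hU0 _ _
  have hG1 : ∀ (a : ℕ) (p : (Fin a → Ω₁) × (Fin h → Ω₂)),
      (∏ r, ∏ s, U (p.1 r) (p.2 s)) ≤ 1 := fun a p =>
    Finset.prod_le_one (fun r _ => Finset.prod_nonneg fun s _ => hU0 _ _)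
      (fun r _ => Finset.prod_le_one (fun s _ => hU0 _ _) (fun s _ => hU1 _ _))
  have hrw : ∀ (a : ℕ), tBcomplete μ ν U a h
      = ∫ y, F y ^ a ∂(Measure.pi fun _ : Fin h => ν) := by
    intro a
    unfold tBcomplete
    rw [integral_integral_swap
      (f := fun (x : Fin a → Ω₁) (y : Fin h → Ω₂) => ∏ r, ∏ s, U (x r) (y s))
      (integrable_of_bdd (hGmeas a) (hG0 a) (hG1 a))]
    refine integral_congr_ae (Filter.Eventually.of_forall fun y => ?_)
    exact integral_pi_prod_eq_pow μ (fun z => ∏ s, U z (y s)) a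
  have hFmeas : Measurable F := by
    have : StronglyMeasurable fun p : (Fin h → Ω₂) × Ω₁ => ∏ s, U p.2 (p.1 s) := by
      refine Measurable.stronglyMeasurable ?_
      refine Finset.measurable_prod _ fun s _ => ?_
      show Measurable fun p : (Fin h → Ω₂) × Ω₁ => Function.uncurry U (p.2, p.1 s)
      exact hU.comp (measurable_snd.prodMk ((measurable_pi_apply s).comp measurable_fst))
    exact this.integral_prod_right'.measurable
  have hF0 : ∀ y, 0 ≤ F y := fun y =>
    integral_nonneg fun z => Finset.prod_nonneg fun s _ => hU0 _ _
  have hF1 : ∀ y, F y ≤ 1 := by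
    intro y
    calc F y ≤ ∫ _ : Ω₁, (1 : ℝ) ∂μ := by
          refine integral_mono ?_ (integrable_const _) fun z =>
            Finset.prod_le_one (fun s _ => hU0 _ _) (fun s _ => hU1 _ _)
          refine integrable_of_bdd ?_
            (fun z => Finset.prod_nonneg fun s _ => hU0 _ _)
            (fun z => Finset.prod_le_one (fun s _ => hU0 _ _) (fun s _ => hU1 _ _))
          refine Finset.measurable_prod _ fun s _ => ?_
          show Measurable fun z : Ω₁ => Function.uncurry U (z, y s)
          exact hU.comp (measurable_id.prodMk measurable_const)
      _ = 1 := by simp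
  rw [hrw i, hrw j, hrw (i + j)]
  exact integral_pow_mul_integral_pow_le _ F hFmeas hF0 hF1 i j
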